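/- Signal subspace bound: Let K = U Σ V^T (true SVD, singular values σ_1 ≥ ... ≥ σ_N ≥ 0) and K = Û M V̂^T where Û, V̂ are orthogonal and M is the block matrix [[Σ̂_t, Ŵ_12],[Ŵ_21, Σ̂_0 + W_22]] with Σ̂_t a k×k diagonal matrix. Partition U = [U_k, U_0], V = [V_k, V_0], Û = [Û_k, Û_0], V̂ = [V̂_k, V̂_0] into first k and last N−k columns. If σ_k² > ‖Σ̂_0 + W_22‖₂², then ‖U_k^T Û_0‖₂ ≤ (σ_k ‖Ŵ_21‖₂ + ‖Ŵ_12‖₂ ‖Σ̂_0 + W_22‖₂) / (σ_k² − ‖Σ̂_0 + W_22‖₂²). -/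

import Mathlib

open Matrix
open scoped Matrix.Norms.L2Operator

section Aux

variable (k l : ℕ)

noncomputable def E1mat : Matrix (Fin (k + l)) (Fin k) ℝ :=
  (1 : Matrix (Fin (k + l)) (Fin (k + l)) ℝ).submatrix id (Fin.castAdd l)

noncomputable def E2mat : Matrix (Fin (k + l)) (Fin l) ℝ :=
  (1 : Matrix (Fin (k + l)) (Fin (k + l)) ℝ).submatrix id (Fin.natAdd k)

lemma hcn_aux : ∀ (a : Fin k) (b : Fin l), Fin.castAdd l a ≠ Fin.natAdd k b := by
  intro a b h
  have := congrArg Fin.val h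
  simp [Fin.castAdd, Fin.natAdd, Fin.castLE] at this
  omega

lemma natAdd_inj_aux {a b : Fin l} : Fin.natAdd k a = Fin.natAdd k b ↔ a = b := by
  constructor
  · intro h; have := congrArg Fin.val h; simp [Fin.natAdd] at this; exact Fin.ext this
  · rintro rfl; rfl

lemma mul_E1mat {m : Type*} [Fintype m] (A : Matrix m (Fin (k+l)) ℝ) :
    A * E1mat k l = A.submatrix id (Fin.castAdd l) := by
  ext i j; simp [E1mat, Matrix.mul_apply, Matrix.one_apply]

lemma mul_E2mat {m : Type*} [Fintype m] (A : Matrix m (Fin (k+l)) ℝ) :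
    A * E2mat k l = A.submatrix id (Fin.natAdd k) := by
  ext i j; simp [E2mat, Matrix.mul_apply, Matrix.one_apply]

lemma E1tE1 : (E1mat k l)ᵀ * E1mat k l = 1 := by
  ext i j
  simp [E1mat, Matrix.mul_apply, Matrix.one_apply, Matrix.transpose_apply, Fin.castAdd_inj]

lemma E2tE2 : (E2mat k l)ᵀ * E2mat k l = 1 := by
  ext i j
  simp [E2mat, Matrix.mul_apply, Matrix.one_apply, Matrix.transpose_apply, natAdd_inj_aux]

lemma M_E2 (St : Matrix (Fin k) (Fin k) ℝ) (W12 : Matrix (Fin k) (Fin l) ℝ)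
    (W21 : Matrix (Fin l) (Fin k) ℝ) (B : Matrix (Fin l) (Fin l) ℝ) :
    (Matrix.fromBlocks St W12 W21 B).submatrix finSumFinEquiv.symm finSumFinEquiv.symm * E2mat k l
      = E1mat k l * W12 + E2mat k l * B := by
  rw [mul_E2mat]
  ext i j
  obtain ⟨s, rfl⟩ := finSumFinEquiv.surjective i
  cases s with
  | inl a =>
      simp [E1mat, E2mat, Matrix.mul_apply, Matrix.one_apply, finSumFinEquiv_apply_left,
        finSumFinEquiv_apply_right, Fin.castAdd_inj, hcn_aux, (hcn_aux k l _ _).symm]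
  | inr a =>
      simp [E1mat, E2mat, Matrix.mul_apply, Matrix.one_apply, finSumFinEquiv_apply_left,
        finSumFinEquiv_apply_right, natAdd_inj_aux, hcn_aux, (hcn_aux k l _ _).symm]

lemma diag_mul_E1mat (σ : Fin (k+l) → ℝ) :
    Matrix.diagonal σ * E1mat k l = E1mat k l * Matrix.diagonal (fun i => σ (Fin.castAdd l i)) := by
  ext i j
  simp only [E1mat, Matrix.mul_apply, Matrix.submatrix_apply, Matrix.one_apply, id_eq,
    Matrix.diagonal_apply]
  rw [Finset.sum_eq_single j]
  · split <;> simp_all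
  · intro b _ hb; simp [hb]
  · intro h; exact absurd (Finset.mem_univ j) h

lemma transpose_norm (m n : ℕ) (A : Matrix (Fin m) (Fin n) ℝ) : ‖Aᵀ‖ = ‖A‖ := by
  rw [← Matrix.conjTranspose_eq_transpose_of_trivial]
  exact Matrix.l2_opNorm_conjTranspose A

lemma norm_le_one_of_orth (m n : ℕ) (hn : 0 < n) (A : Matrix (Fin m) (Fin n) ℝ)
    (h : Aᵀ * A = 1) : ‖A‖ ≤ 1 := by
  have h1 : ‖Aᵀ * A‖ = ‖A‖ * ‖A‖ := by
    rw [← Matrix.conjTranspose_eq_transpose_of_trivial]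
    exact Matrix.l2_opNorm_conjTranspose_mul_self A
  have : Nonempty (Fin n) := ⟨⟨0, hn⟩⟩
  rw [h, norm_one] at h1
  nlinarith [norm_nonneg A]

lemma diag_norm_le (n : ℕ) (d : Fin n → ℝ) (c : ℝ) (hc : 0 ≤ c) (hd : ∀ i, |d i| ≤ c) :
    ‖(Matrix.diagonal d : Matrix (Fin n) (Fin n) ℝ)‖ ≤ c := by
  rw [Matrix.l2_opNorm_def]
  refine ContinuousLinearMap.opNorm_le_bound _ hc (fun x => ?_)
  have hx : ((LinearEquiv.trans (Matrix.toEuclideanLin) LinearMap.toContinuousLinearMap)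
      (Matrix.diagonal d)) x
      = (EuclideanSpace.equiv (Fin n) ℝ).symm
          (Matrix.diagonal d *ᵥ (EuclideanSpace.equiv (Fin n) ℝ x)) := rfl
  rw [hx, EuclideanSpace.norm_eq, EuclideanSpace.norm_eq,
    ← Real.sqrt_sq hc, ← Real.sqrt_mul (by positivity)]
  apply Real.sqrt_le_sqrt
  rw [Finset.mul_sum]
  apply Finset.sum_le_sum
  intro i _
  have h2 : ((EuclideanSpace.equiv (Fin n) ℝ).symm
      (Matrix.diagonal d *ᵥ (EuclideanSpace.equiv (Fin n) ℝ x))) i = d i * x i := by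
    simp [Matrix.mulVec_diagonal]
  rw [h2]
  have h1 : ‖d i * x i‖ ^ 2 = (d i)^2 * ‖x i‖^2 := by
    rw [norm_mul, mul_pow, Real.norm_eq_abs, sq_abs]
  rw [h1]
  have h3 : (d i)^2 ≤ c^2 := by
    nlinarith [hd i, abs_nonneg (d i), neg_abs_le (d i), le_abs_self (d i)]
  nlinarith [sq_nonneg ‖x i‖, norm_nonneg (x i)]

lemma key_rel (k l : ℕ) (P Q Ph Qh : Matrix (Fin (k+l)) (Fin (k+l)) ℝ)
    (σ : Fin (k+l) → ℝ)
    (St : Matrix (Fin k) (Fin k) ℝ) (W12 : Matrix (Fin k) (Fin l) ℝ)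
    (W21 : Matrix (Fin l) (Fin k) ℝ) (B : Matrix (Fin l) (Fin l) ℝ)
    (hP : Pᵀ * P = 1) (hQh : Qhᵀ * Qh = 1)
    (hEq : P * Matrix.diagonal σ * Qᵀ
      = Ph * ((Matrix.fromBlocks St W12 W21 B).submatrix finSumFinEquiv.symm finSumFinEquiv.symm)
          * Qhᵀ) :
    Matrix.diagonal (fun i : Fin k => σ (Fin.castAdd l i)) * ((E1mat k l)ᵀ * (Qᵀ * Qh) * E2mat k l)
      = ((E1mat k l)ᵀ * (Pᵀ * Ph) * E1mat k l) * W12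
        + ((E1mat k l)ᵀ * (Pᵀ * Ph) * E2mat k l) * B := by
  set M := (Matrix.fromBlocks St W12 W21 B).submatrix finSumFinEquiv.symm finSumFinEquiv.symm
    with hM
  set D := Matrix.diagonal σ with hD
  set Sk := Matrix.diagonal (fun i : Fin k => σ (Fin.castAdd l i)) with hSk
  have hE1D : Sk * (E1mat k l)ᵀ = (E1mat k l)ᵀ * D := by
    have h := congrArg Matrix.transpose (diag_mul_E1mat k l σ)
    simpa [Matrix.transpose_mul, Matrix.diagonal_transpose] using h.symm
  have e1 : D * (Qᵀ * Qh) = (Pᵀ * Ph) * M := by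
    have h0 := congrArg (fun A => Pᵀ * A * Qh) hEq
    simp only [← Matrix.mul_assoc] at h0
    rw [hP, Matrix.one_mul] at h0
    rw [Matrix.mul_assoc (Pᵀ * Ph * M), hQh, Matrix.mul_one] at h0
    simp only [Matrix.mul_assoc] at h0 ⊢
    exact h0
  calc Sk * ((E1mat k l)ᵀ * (Qᵀ * Qh) * E2mat k l)
      = (E1mat k l)ᵀ * (D * (Qᵀ * Qh)) * E2mat k l := by
        simp only [← Matrix.mul_assoc]; rw [hE1D]
    _ = (E1mat k l)ᵀ * ((Pᵀ * Ph) * M) * E2mat k l := by rw [e1]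
    _ = (E1mat k l)ᵀ * (Pᵀ * Ph) * (M * E2mat k l) := by simp only [Matrix.mul_assoc]
    _ = (E1mat k l)ᵀ * (Pᵀ * Ph) * (E1mat k l * W12 + E2mat k l * B) := by rw [hM, M_E2]
    _ = _ := by rw [Matrix.mul_add]; simp only [← Matrix.mul_assoc]

lemma smul_norm_le (k l : ℕ) (s : ℝ) (σ : Fin (k+l) → ℝ) (hs : 0 < s)
    (hle : ∀ i : Fin k, s ≤ σ (Fin.castAdd l i)) (Z : Matrix (Fin k) (Fin l) ℝ) :
    s * ‖Z‖ ≤ ‖Matrix.diagonal (fun i : Fin k => σ (Fin.castAdd l i)) * Z‖ := by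
  set d : Fin k → ℝ := fun i => σ (Fin.castAdd l i) with hd
  have hdpos : ∀ i, 0 < d i := fun i => lt_of_lt_of_le hs (hle i)
  have hinv : Matrix.diagonal (fun i => (d i)⁻¹) * Matrix.diagonal d = 1 := by
    rw [Matrix.diagonal_mul_diagonal]
    have : (fun i => (d i)⁻¹ * d i) = fun _ => (1 : ℝ) := by
      funext i; exact inv_mul_cancel₀ (ne_of_gt (hdpos i))
    rw [this, Matrix.diagonal_one]
  have hZ : Z = Matrix.diagonal (fun i => (d i)⁻¹) * (Matrix.diagonal d * Z) := by
    rw [← Matrix.mul_assoc, hinv, Matrix.one_mul]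
  have hninv : ‖(Matrix.diagonal (fun i => (d i)⁻¹) : Matrix (Fin k) (Fin k) ℝ)‖ ≤ s⁻¹ := by
    apply diag_norm_le
    · positivity
    · intro i
      rw [abs_of_pos (inv_pos.mpr (hdpos i))]
      exact inv_anti₀ hs (hle i)
  have h1 : ‖Z‖ ≤ s⁻¹ * ‖Matrix.diagonal d * Z‖ := by
    calc ‖Z‖ = ‖Matrix.diagonal (fun i => (d i)⁻¹) * (Matrix.diagonal d * Z)‖ := by rw [← hZ]
      _ ≤ ‖(Matrix.diagonal (fun i => (d i)⁻¹) : Matrix (Fin k) (Fin k) ℝ)‖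
            * ‖Matrix.diagonal d * Z‖ := Matrix.l2_opNorm_mul _ _
      _ ≤ s⁻¹ * ‖Matrix.diagonal d * Z‖ :=
          mul_le_mul_of_nonneg_right hninv (norm_nonneg _)
  have := mul_le_mul_of_nonneg_left h1 hs.le
  calc s * ‖Z‖ ≤ s * (s⁻¹ * ‖Matrix.diagonal d * Z‖) := this
    _ = ‖Matrix.diagonal d * Z‖ := by field_simp

lemma norm_one_le (n : ℕ) : ‖(1 : Matrix (Fin n) (Fin n) ℝ)‖ ≤ 1 := by
  rcases Nat.eq_zero_or_pos n with h | h
  · subst h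
    have : (1 : Matrix (Fin 0) (Fin 0) ℝ) = 0 := Subsingleton.elim _ _
    rw [this, norm_zero]; norm_num
  · have : Nonempty (Fin n) := ⟨⟨0, h⟩⟩
    rw [norm_one]

lemma norm_le_one_of_orth' (m n : ℕ) (A : Matrix (Fin m) (Fin n) ℝ)
    (h : Aᵀ * A = 1) : ‖A‖ ≤ 1 := by
  have h1 : ‖Aᵀ * A‖ = ‖A‖ * ‖A‖ := by
    rw [← Matrix.conjTranspose_eq_transpose_of_trivial]
    exact Matrix.l2_opNorm_conjTranspose_mul_self A
  rw [h] at h1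
  have h2 := norm_one_le n
  nlinarith [norm_nonneg A]

end Aux

lemma norm_mul_le_one {a b c : ℕ}
    (A : Matrix (Fin a) (Fin b) ℝ) (B : Matrix (Fin b) (Fin c) ℝ) (hA : ‖A‖ ≤ 1) (hB : ‖B‖ ≤ 1) :
    ‖A * B‖ ≤ 1 := by
  calc ‖A * B‖ ≤ ‖A‖ * ‖B‖ := Matrix.l2_opNorm_mul _ _
    _ ≤ 1 := by nlinarith [norm_nonneg A, norm_nonneg B]

set_option maxHeartbeats 1000000 in
/-- Signal subspace bound (Theorem 3.1 of the paper, signal case): with true SVD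
`K = U Σ Vᵀ` (nonincreasing nonnegative singular values `σ`, `σ_k > 0`) and approximate
factorization `K = Û [[Σ̂_t, Ŵ₁₂],[Ŵ₂₁, Σ̂₀+W₂₂]] V̂ᵀ`, if `σ_k² > ‖Σ̂₀+W₂₂‖₂²` then
`‖U_kᵀ Û₀‖₂ ≤ (σ_k ‖Ŵ₂₁‖₂ + ‖Ŵ₁₂‖₂ ‖Σ̂₀+W₂₂‖₂)/(σ_k² − ‖Σ̂₀+W₂₂‖₂²)`. -/
theorem stmt6 (k l : ℕ) (hk : 0 < k)
    (K U V Uh Vh : Matrix (Fin (k + l)) (Fin (k + l)) ℝ)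
    (σ : Fin (k + l) → ℝ)
    (St : Matrix (Fin k) (Fin k) ℝ) (W12 : Matrix (Fin k) (Fin l) ℝ)
    (W21 : Matrix (Fin l) (Fin k) ℝ) (S0 W22 : Matrix (Fin l) (Fin l) ℝ)
    (hU : Uᵀ * U = 1) (hU' : U * Uᵀ = 1) (hV : Vᵀ * V = 1) (hV' : V * Vᵀ = 1)
    (hUh : Uhᵀ * Uh = 1) (hUh' : Uh * Uhᵀ = 1) (hVh : Vhᵀ * Vh = 1) (hVh' : Vh * Vhᵀ = 1)
    (hσdec : Antitone σ) (hσnn : ∀ i, 0 ≤ σ i)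
    (hσk : 0 < σ ⟨k - 1, by omega⟩)
    (hSt : St.IsDiag) (hS0 : S0.IsDiag)
    (hK : K = U * Matrix.diagonal σ * Vᵀ)
    (hKh : K = Uh * (Matrix.fromBlocks St W12 W21 (S0 + W22)).submatrix
        finSumFinEquiv.symm finSumFinEquiv.symm * Vhᵀ)
    (hgap : ‖S0 + W22‖ ^ 2 < (σ ⟨k - 1, by omega⟩) ^ 2) :
    ‖(U.submatrix id (Fin.castAdd l))ᵀ * Uh.submatrix id (Fin.natAdd k)‖ ≤
      (σ ⟨k - 1, by omega⟩ * ‖W21‖ + ‖W12‖ * ‖S0 + W22‖) /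
        ((σ ⟨k - 1, by omega⟩) ^ 2 - ‖S0 + W22‖ ^ 2) := by
  set s := σ ⟨k - 1, by omega⟩ with hs
  set B := S0 + W22 with hB
  have hKK : U * Matrix.diagonal σ * Vᵀ
      = Uh * ((Matrix.fromBlocks St W12 W21 B).submatrix finSumFinEquiv.symm finSumFinEquiv.symm)
          * Vhᵀ := hK.symm.trans hKh
  have hKKT : V * Matrix.diagonal σ * Uᵀ
      = Vh * ((Matrix.fromBlocks Stᵀ W21ᵀ W12ᵀ Bᵀ).submatrix finSumFinEquiv.symm
          finSumFinEquiv.symm) * Uhᵀ := by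
    have h := congrArg Matrix.transpose hKK
    simp only [Matrix.transpose_mul, Matrix.transpose_transpose, Matrix.diagonal_transpose,
      Matrix.transpose_submatrix, Matrix.fromBlocks_transpose] at h
    simp only [← Matrix.mul_assoc] at h ⊢
    exact h
  have rel1 := key_rel k l U V Uh Vh σ St W12 W21 B hU hVh hKK
  have rel2 := key_rel k l V U Vh Uh σ Stᵀ W21ᵀ W12ᵀ Bᵀ hV hUh hKKT
  set X := (E1mat k l)ᵀ * (Uᵀ * Uh) * E2mat k l with hX
  set Y := (E1mat k l)ᵀ * (Vᵀ * Vh) * E2mat k l with hY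
  -- norms ≤ 1
  have hE1n : ‖E1mat k l‖ ≤ 1 := norm_le_one_of_orth' _ _ _ (E1tE1 k l)
  have hE2n : ‖E2mat k l‖ ≤ 1 := norm_le_one_of_orth' _ _ _ (E2tE2 k l)
  have hE1tn : ‖(E1mat k l)ᵀ‖ ≤ 1 := by rw [transpose_norm]; exact hE1n
  have hUn : ‖U‖ ≤ 1 := norm_le_one_of_orth' _ _ _ hU
  have hVn : ‖V‖ ≤ 1 := norm_le_one_of_orth' _ _ _ hV
  have hUhn : ‖Uh‖ ≤ 1 := norm_le_one_of_orth' _ _ _ hUh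
  have hVhn : ‖Vh‖ ≤ 1 := norm_le_one_of_orth' _ _ _ hVh
  have hUtn : ‖Uᵀ‖ ≤ 1 := by rw [transpose_norm]; exact hUn
  have hVtn : ‖Vᵀ‖ ≤ 1 := by rw [transpose_norm]; exact hVn
  have hC1 : ‖(E1mat k l)ᵀ * (Uᵀ * Uh) * E1mat k l‖ ≤ 1 :=
    norm_mul_le_one _ _ (norm_mul_le_one _ _ hE1tn (norm_mul_le_one _ _ hUtn hUhn)) hE1n
  have hC2 : ‖(E1mat k l)ᵀ * (Vᵀ * Vh) * E1mat k l‖ ≤ 1 :=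
    norm_mul_le_one _ _ (norm_mul_le_one _ _ hE1tn (norm_mul_le_one _ _ hVtn hVhn)) hE1n
  -- singular value bound
  have hle : ∀ i : Fin k, s ≤ σ (Fin.castAdd l i) := by
    intro i
    apply hσdec
    rw [Fin.le_def]
    simp only [Fin.coe_castAdd]
    omega
  have h1 : s * ‖Y‖ ≤ ‖W12‖ + ‖X‖ * ‖B‖ := by
    calc s * ‖Y‖ ≤ ‖Matrix.diagonal (fun i : Fin k => σ (Fin.castAdd l i)) * Y‖ :=
          smul_norm_le k l s σ hσk hle Y
      _ = ‖(E1mat k l)ᵀ * (Uᵀ * Uh) * E1mat k l * W12 + X * B‖ := by rw [rel1]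
      _ ≤ ‖(E1mat k l)ᵀ * (Uᵀ * Uh) * E1mat k l * W12‖ + ‖X * B‖ := norm_add_le _ _
      _ ≤ ‖(E1mat k l)ᵀ * (Uᵀ * Uh) * E1mat k l‖ * ‖W12‖ + ‖X‖ * ‖B‖ :=
          add_le_add (Matrix.l2_opNorm_mul _ _) (Matrix.l2_opNorm_mul _ _)
      _ ≤ ‖W12‖ + ‖X‖ * ‖B‖ := by
          nlinarith [norm_nonneg W12]
  have h2 : s * ‖X‖ ≤ ‖W21‖ + ‖Y‖ * ‖B‖ := by
    calc s * ‖X‖ ≤ ‖Matrix.diagonal (fun i : Fin k => σ (Fin.castAdd l i)) * X‖ :=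
          smul_norm_le k l s σ hσk hle X
      _ = ‖(E1mat k l)ᵀ * (Vᵀ * Vh) * E1mat k l * W21ᵀ + Y * Bᵀ‖ := by rw [rel2]
      _ ≤ ‖(E1mat k l)ᵀ * (Vᵀ * Vh) * E1mat k l * W21ᵀ‖ + ‖Y * Bᵀ‖ := norm_add_le _ _
      _ ≤ ‖(E1mat k l)ᵀ * (Vᵀ * Vh) * E1mat k l‖ * ‖W21ᵀ‖ + ‖Y‖ * ‖Bᵀ‖ :=
          add_le_add (Matrix.l2_opNorm_mul _ _) (Matrix.l2_opNorm_mul _ _)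
      _ = ‖(E1mat k l)ᵀ * (Vᵀ * Vh) * E1mat k l‖ * ‖W21‖ + ‖Y‖ * ‖B‖ := by
          rw [transpose_norm, transpose_norm]
      _ ≤ ‖W21‖ + ‖Y‖ * ‖B‖ := by
          nlinarith [norm_nonneg W21]
  have hgoal : (U.submatrix id (Fin.castAdd l))ᵀ * Uh.submatrix id (Fin.natAdd k) = X := by
    rw [← mul_E1mat, ← mul_E2mat, Matrix.transpose_mul, hX]
    simp only [Matrix.mul_assoc]
  rw [hgoal]
  have hden : 0 < s ^ 2 - ‖B‖ ^ 2 := sub_pos.mpr hgap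
  rw [le_div_iff₀ hden]
  have h3 := mul_le_mul_of_nonneg_left h2 hσk.le
  have h4 := mul_le_mul_of_nonneg_left h1 (norm_nonneg B)
  nlinarith [norm_nonneg X, norm_nonneg Y, norm_nonneg B, norm_nonneg W12, norm_nonneg W21]
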